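/- Let b ≥ 1, let v ∈ ℝ^{2^{b−1}}, and let a : {0,…,b−1} → ℝ (with the convention a(−1) = 0) be such that for every real sequence x = (x_0, x_1, …), vᵀ·Ω_{b−1,0}(x)·u_{b−1} = 2^{−(b−1)}·Σ_{j=0}^{b−1} C(b−1,j)·a(j)·x_j. Then for every real sequence x: (u_1 ⊗ v)ᵀ·Ω_{b,0}(x)·u_b = 2^{−b}·Σ_{j=0}^{b} C(b,j)·a_u(j)·x_j with a_u(j) = ((b−j)/b)·a(j) + (j/b)·a(j−1), and (w_1 ⊗ v)ᵀ·Ω_{b,0}(x)·u_b = 2^{−b}·Σ_{j=0}^{b} C(b,j)·a_w(j)·x_j with a_w(j) = ((b−j)/b)·a(j) − (j/b)·a(j−1). -/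

import Mathlib

open Finset Matrix

/-- The entries of the vector `𝐚_b`, defined by `𝐚_1 = (0,1)` and
`𝐚_b = (𝐚_{b−1}, 𝐚_{b−1} + 𝟏)`; `avec b i` is the `(i+1)`-st entry of `𝐚_b`. -/
def avec : (b : ℕ) → Fin (2 ^ b) → ℕ
  | 0, _ => 0
  | b + 1, i =>
    if h : (i : ℕ) < 2 ^ b then avec b ⟨i, h⟩
    else avec b ⟨(i : ℕ) - 2 ^ b, by
        have h2 : (i : ℕ) < 2 ^ b * 2 := by rw [← pow_succ]; exact i.isLt
        omega⟩ + 1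

/-- Kronecker product of the vector `(c₀, c₁)ᵀ` with a vector of length `2^b`. -/
noncomputable def kron1 {b : ℕ} (c0 c1 : ℝ) (v : Fin (2 ^ b) → ℝ) : Fin (2 ^ (b + 1)) → ℝ :=
  fun i =>
    if h : (i : ℕ) < 2 ^ b then c0 * v ⟨i, h⟩
    else c1 * v ⟨(i : ℕ) - 2 ^ b, by
        have h2 : (i : ℕ) < 2 ^ b * 2 := by rw [← pow_succ]; exact i.isLt
        omega⟩

/-- The `b`-fold Kronecker power `u_b = u_1^{⊗b}` of `u_1 = (1,−1)ᵀ/√2`. -/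
noncomputable def uvec : (b : ℕ) → Fin (2 ^ b) → ℝ
  | 0, _ => 1
  | b + 1, i => kron1 (Real.sqrt 2)⁻¹ (-(Real.sqrt 2)⁻¹) (uvec b) i

lemma sum_fin_split (m : ℕ) (f : Fin (2 ^ (m + 1)) → ℝ) :
    ∑ i, f i = (∑ i : Fin (2 ^ m), f ⟨i, by
        have := i.isLt; have : (i : ℕ) < 2 ^ (m+1) := by rw [pow_succ]; omega
        exact this⟩)
      + ∑ i : Fin (2 ^ m), f ⟨2 ^ m + i, by
        have := i.isLt; rw [pow_succ]; omega⟩ := by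
  rw [← Equiv.sum_comp (finCongr (by rw [pow_succ]; ring) :
      Fin (2 ^ m + 2 ^ m) ≃ Fin (2 ^ (m + 1))) f, Fin.sum_univ_add]
  congr 1 <;>
    (apply Finset.sum_congr rfl; intro i _; congr 1; apply Fin.ext; simp)

lemma kron_split (b : ℕ) (c0 c1 : ℝ) (v : Fin (2 ^ b) → ℝ) (d : ℕ → ℝ) :
    kron1 c0 c1 v ⬝ᵥ (Matrix.diagonal (fun i => d (avec (b + 1) i))) *ᵥ uvec (b + 1)
      = c0 * (Real.sqrt 2)⁻¹ * (v ⬝ᵥ (Matrix.diagonal (fun i => d (avec b i))) *ᵥ uvec b)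
        - c1 * (Real.sqrt 2)⁻¹ *
          (v ⬝ᵥ (Matrix.diagonal (fun i => (fun j => d (j + 1)) (avec b i))) *ᵥ uvec b) := by
  simp only [dotProduct, Matrix.mulVec_diagonal]
  rw [sum_fin_split]
  have h1 : ∀ i : Fin (2 ^ b), (kron1 c0 c1 v ⟨(i : ℕ), by
      have := i.isLt; rw [pow_succ]; omega⟩ : ℝ) = c0 * v i := by
    intro i; simp [kron1, i.isLt]
  congr 1
  · rw [Finset.mul_sum]
    apply Finset.sum_congr rfl; intro i _
    have hi : (i : ℕ) < 2 ^ b := i.isLt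
    simp only [kron1, avec, uvec, hi, dif_pos, dite_true]
    ring
  · rw [show c1 * (Real.sqrt 2)⁻¹ * ∑ i : Fin (2 ^ b),
        v i * ((fun j => d (j + 1)) (avec b i) * uvec b i)
      = ∑ i : Fin (2 ^ b), c1 * (Real.sqrt 2)⁻¹ *
          (v i * (d (avec b i + 1) * uvec b i)) from by rw [Finset.mul_sum],
      ← Finset.sum_neg_distrib]
    apply Finset.sum_congr rfl; intro i _
    have hi : ¬ (2 ^ b + (i : ℕ) < 2 ^ b) := by omega
    have hv : 2 ^ b + (i : ℕ) - 2 ^ b = (i : ℕ) := by omega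
    simp only [kron1, avec, uvec, hi, dif_neg, dite_false, hv, Fin.eta]
    ring

lemma choose_cast_one (b i : ℕ) (hi : i < b + 1) :
    (Nat.choose (b + 1) (i + 1) : ℝ) * (((b : ℝ) + 1 - ((i : ℝ) + 1)) / ((b : ℝ) + 1))
      = (Nat.choose b (i + 1) : ℝ) := by
  have hb : ((b : ℝ) + 1) ≠ 0 := by positivity
  have h : ((Nat.choose (b + 1) (i + 1)) : ℝ) * ((b : ℝ) + 1 - ((i : ℝ) + 1))
      = ((Nat.choose b (i + 1)) : ℝ) * ((b : ℝ) + 1) := by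
    have h0 := Nat.choose_mul_succ_eq b (i + 1)
    have hs : ((b + 1 - (i + 1) : ℕ) : ℝ) = (b : ℝ) + 1 - ((i : ℝ) + 1) := by
      rw [Nat.cast_sub (by omega)]; push_cast; ring
    rw [← hs]
    exact_mod_cast h0.symm
  field_simp
  linear_combination h

lemma choose_cast_two (b i : ℕ) :
    (Nat.choose (b + 1) (i + 1) : ℝ) * (((i : ℝ) + 1) / ((b : ℝ) + 1))
      = (Nat.choose b i : ℝ) := by
  have hb : ((b : ℝ) + 1) ≠ 0 := by positivity
  have h : ((b + 1) * Nat.choose b i : ℕ) = (Nat.choose (b + 1) (i + 1) * (i + 1) : ℕ) :=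
    Nat.add_one_mul_choose_eq b i
  have hr := congrArg (Nat.cast : ℕ → ℝ) h
  push_cast at hr
  rw [← mul_div_assoc, div_eq_iff hb]
  linear_combination -hr

lemma sum_combine (b : ℕ) (a x : ℕ → ℝ) (ε : ℝ) :
    (∑ j ∈ Finset.range (b + 1), (Nat.choose b j : ℝ) * a j * x j)
      + ε * ∑ j ∈ Finset.range (b + 1), (Nat.choose b j : ℝ) * a j * x (j + 1)
    = ∑ j ∈ Finset.range (b + 2), (Nat.choose (b + 1) j : ℝ)
        * ((((b : ℝ) + 1 - j) / ((b : ℝ) + 1)) * a j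
            + ε * (((j : ℝ) / ((b : ℝ) + 1)) * a (j - 1))) * x j := by
  have hb : ((b : ℝ) + 1) ≠ 0 := by positivity
  rw [Finset.sum_range_succ' (fun j => (Nat.choose (b + 1) j : ℝ)
        * ((((b : ℝ) + 1 - j) / ((b : ℝ) + 1)) * a j
            + ε * (((j : ℝ) / ((b : ℝ) + 1)) * a (j - 1))) * x j) (b + 1),
      Finset.sum_range_succ' (fun j => (Nat.choose b j : ℝ) * a j * x j) b,
      Finset.mul_sum]
  have hlast : (Nat.choose b (b + 1) : ℝ) * a (b + 1) * x (b + 1) = 0 := by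
    simp [Nat.choose_eq_zero_of_lt]
  rw [show (∑ i ∈ Finset.range b, (Nat.choose b (i + 1) : ℝ) * a (i + 1) * x (i + 1))
      = (∑ i ∈ Finset.range (b + 1), (Nat.choose b (i + 1) : ℝ) * a (i + 1) * x (i + 1))
        - (Nat.choose b (b + 1) : ℝ) * a (b + 1) * x (b + 1) from by
    rw [Finset.sum_range_succ]; ring]
  rw [hlast, sub_zero, add_right_comm, ← Finset.sum_add_distrib]
  have h0 : (Nat.choose (b + 1) 0 : ℝ)
      * ((((b : ℝ) + 1 - (0 : ℕ)) / ((b : ℝ) + 1)) * a 0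
          + ε * ((((0 : ℕ) : ℝ) / ((b : ℝ) + 1)) * a (0 - 1))) * x 0
      = (Nat.choose b 0 : ℝ) * a 0 * x 0 := by
    simp
    try field_simp
    try simp
  rw [h0]
  congr 1
  · apply Finset.sum_congr rfl
    intro i hi
    have hi' : i < b + 1 := Finset.mem_range.mp hi
    have e1 := choose_cast_one b i hi'
    have e2 := choose_cast_two b i
    have hcast : ((i + 1 : ℕ) : ℝ) = (i : ℝ) + 1 := by push_cast; ring
    calc (Nat.choose b (i + 1) : ℝ) * a (i + 1) * x (i + 1)
          + ε * ((Nat.choose b i : ℝ) * a i * x (i + 1))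
        = ((Nat.choose (b + 1) (i + 1) : ℝ)
            * (((b : ℝ) + 1 - ((i : ℝ) + 1)) / ((b : ℝ) + 1))) * a (i + 1) * x (i + 1)
          + ε * (((Nat.choose (b + 1) (i + 1) : ℝ)
            * (((i : ℝ) + 1) / ((b : ℝ) + 1))) * a i * x (i + 1)) := by rw [e1, e2]
      _ = (Nat.choose (b + 1) (i + 1) : ℝ)
            * ((((b : ℝ) + 1 - ((i + 1 : ℕ) : ℝ)) / ((b : ℝ) + 1)) * a (i + 1)
                + ε * ((((i + 1 : ℕ) : ℝ) / ((b : ℝ) + 1)) * a (i + 1 - 1))) * x (i + 1) := by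
          rw [hcast]; simp only [Nat.add_sub_cancel]; ring

/-- Inductive step for computing `vᵀ Ω_{b,0} u_b`:  here `b` plays the role of `b−1` in the
natural-language statement, `Ω_{b,0}(x) = diag(x_{a_1},…,x_{a_{2^b}})`,
`u_1 ⊗ v = kron1 (1/√2) (−1/√2) v` and `w_1 ⊗ v = kron1 (1/√2) (1/√2) v`. -/
theorem kron_diagonal_dot_step (b : ℕ) (v : Fin (2 ^ b) → ℝ) (a : ℕ → ℝ)
    (ha : ∀ x : ℕ → ℝ,
      v ⬝ᵥ (Matrix.diagonal (fun i => x (avec b i))) *ᵥ uvec b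
        = ((2 : ℝ) ^ b)⁻¹ * ∑ j ∈ Finset.range (b + 1), (Nat.choose b j : ℝ) * a j * x j) :
    (∀ x : ℕ → ℝ,
      kron1 (Real.sqrt 2)⁻¹ (-(Real.sqrt 2)⁻¹) v ⬝ᵥ
          (Matrix.diagonal (fun i => x (avec (b + 1) i))) *ᵥ uvec (b + 1)
        = ((2 : ℝ) ^ (b + 1))⁻¹ * ∑ j ∈ Finset.range (b + 2), (Nat.choose (b + 1) j : ℝ)
            * ((((b : ℝ) + 1 - j) / ((b : ℝ) + 1)) * a j
                + ((j : ℝ) / ((b : ℝ) + 1)) * a (j - 1)) * x j) ∧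
    (∀ x : ℕ → ℝ,
      kron1 (Real.sqrt 2)⁻¹ (Real.sqrt 2)⁻¹ v ⬝ᵥ
          (Matrix.diagonal (fun i => x (avec (b + 1) i))) *ᵥ uvec (b + 1)
        = ((2 : ℝ) ^ (b + 1))⁻¹ * ∑ j ∈ Finset.range (b + 2), (Nat.choose (b + 1) j : ℝ)
            * ((((b : ℝ) + 1 - j) / ((b : ℝ) + 1)) * a j
                - ((j : ℝ) / ((b : ℝ) + 1)) * a (j - 1)) * x j) := by
  have h2 : ((Real.sqrt 2)⁻¹ * (Real.sqrt 2)⁻¹ : ℝ) = (2 : ℝ)⁻¹ := by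
    rw [← mul_inv, Real.mul_self_sqrt (by norm_num)]
  constructor <;> intro x
  · rw [kron_split, ha x, ha (fun j => x (j + 1))]
    rw [show (∑ j ∈ Finset.range (b + 2), (Nat.choose (b + 1) j : ℝ)
          * ((((b : ℝ) + 1 - j) / ((b : ℝ) + 1)) * a j
              + ((j : ℝ) / ((b : ℝ) + 1)) * a (j - 1)) * x j)
        = ∑ j ∈ Finset.range (b + 2), (Nat.choose (b + 1) j : ℝ)
          * ((((b : ℝ) + 1 - j) / ((b : ℝ) + 1)) * a j
              + (1 : ℝ) * (((j : ℝ) / ((b : ℝ) + 1)) * a (j - 1))) * x j from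
      Finset.sum_congr rfl (fun j _ => by ring), ← sum_combine, h2, pow_succ]
    rw [show (-(Real.sqrt 2)⁻¹ * (Real.sqrt 2)⁻¹ : ℝ) = -(2 : ℝ)⁻¹ from by
      rw [neg_mul, h2]]
    ring
  · rw [kron_split, ha x, ha (fun j => x (j + 1))]
    rw [show (∑ j ∈ Finset.range (b + 2), (Nat.choose (b + 1) j : ℝ)
          * ((((b : ℝ) + 1 - j) / ((b : ℝ) + 1)) * a j
              - ((j : ℝ) / ((b : ℝ) + 1)) * a (j - 1)) * x j)
        = ∑ j ∈ Finset.range (b + 2), (Nat.choose (b + 1) j : ℝ)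
          * ((((b : ℝ) + 1 - j) / ((b : ℝ) + 1)) * a j
              + (-1 : ℝ) * (((j : ℝ) / ((b : ℝ) + 1)) * a (j - 1))) * x j from
      Finset.sum_congr rfl (fun j _ => by ring), ← sum_combine, h2, pow_succ]
    ring
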